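/- Let k be a field of characteristic ≠ 2, H = k[t,t⁻¹] the Laurent polynomial Hopf algebra (t grouplike), and B = Λ(V) the exterior algebra on a finite-dimensional vector space V with dim V > 1, viewed as a supercommutative superalgebra with V odd. Let x ∈ Λ²(V) be a nonzero element with x² = 0. Then g : k[t,t⁻¹] → Λ(V), g(t^{±1}) = 1 ± x, is a well-defined algebra map, and the induced map Λ(V) ⊗ k[t,t⁻¹] → Λ(V) ⊗ k[t,t⁻¹], b⊗h ↦ b·(g⊗id)(Δ(h)), is a B-algebra automorphism in right H-supercomodules which is not of the form id_B ⊗ ψ for any Hopf-comodule algebra endomorphism ψ of k[t,t⁻¹]. -/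

import Mathlib

/-!
STATEMENT 16: Let `k` be a field of characteristic ≠ 2, `H = k[t,t⁻¹]` the Laurent
polynomial Hopf algebra (`t` grouplike, realized as the group algebra of `ℤ`), and
`B = Λ(V)` the exterior algebra on a `k`-vector space `V` with `dim V > 1`.  For
`0 ≠ x ∈ Λ²(V)` with `x² = 0`, the assignment `g(t^{±1}) = 1 ± x` defines an algebra map
`g : k[t,t⁻¹] → Λ(V)`, and `b ⊗ h ↦ b·(g ⊗ id)(Δ(h))` is a `B`-algebra automorphism of
the trivial `H`-Galois extension `Λ(V) ⊗ k[t,t⁻¹]` in right `H`-supercomodules which is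
not induced by any Hopf-comodule algebra endomorphism of `k[t,t⁻¹]`.
-/

open TensorProduct

noncomputable section

variable (k : Type) [Field k]

/-- `k[t,t⁻¹]`, as the group algebra of `ℤ`. -/
abbrev Laurent := MonoidAlgebra k (Multiplicative ℤ)

/-- `t` and `t⁻¹`. -/
def tGen : Laurent k := MonoidAlgebra.of k (Multiplicative ℤ) (Multiplicative.ofAdd 1)
def tInv : Laurent k := MonoidAlgebra.of k (Multiplicative ℤ) (Multiplicative.ofAdd (-1))

/-- The comultiplication of `k[t,t⁻¹]`, making every `tⁿ` grouplike. -/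
def laurentComul : Laurent k →ₗ[k] Laurent k ⊗[k] Laurent k :=
  (Finsupp.lsum k fun g => LinearMap.toSpanSingleton k _
    (MonoidAlgebra.of k (Multiplicative ℤ) g ⊗ₜ MonoidAlgebra.of k (Multiplicative ℤ) g)) ∘ₗ
    (MonoidAlgebra.coeffLinearEquiv k).toLinearMap

section Aux

variable (V : Type) [AddCommGroup V] [Module k V]

-- abbreviations
local notation "A" => ExteriorAlgebra k V
local notation "H" => Laurent k

lemma laurentComul_single (n : Multiplicative ℤ) (c : k) :
    laurentComul k (MonoidAlgebra.single n c) =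
      (MonoidAlgebra.single n c : Laurent k) ⊗ₜ (MonoidAlgebra.of k (Multiplicative ℤ) n) := by
  rw [laurentComul, LinearMap.comp_apply]
  rw [LinearEquiv.coe_coe, MonoidAlgebra.coeffLinearEquiv_apply, MonoidAlgebra.coeff_single]
  erw [Finsupp.lsum_single]
  rw [LinearMap.toSpanSingleton_apply,
    TensorProduct.smul_tmul', MonoidAlgebra.of_apply, MonoidAlgebra.smul_single', mul_one]

def phiMap (f : Laurent k →ₗ[k] ExteriorAlgebra k V) :
    ExteriorAlgebra k V ⊗[k] Laurent k →ₗ[k] ExteriorAlgebra k V ⊗[k] Laurent k :=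
  (LinearMap.rTensor (Laurent k)
        ((LinearMap.mul' k (ExteriorAlgebra k V)) ∘ₗ
          (LinearMap.lTensor (ExteriorAlgebra k V) f))) ∘ₗ
      (TensorProduct.assoc k (ExteriorAlgebra k V) (Laurent k)
        (Laurent k)).symm.toLinearMap ∘ₗ
      (LinearMap.lTensor (ExteriorAlgebra k V) (laurentComul k))

lemma phiMap_tmul_single (f : Laurent k →ₗ[k] ExteriorAlgebra k V)
    (b : ExteriorAlgebra k V) (n : Multiplicative ℤ) (c : k) :
    phiMap k V f (b ⊗ₜ MonoidAlgebra.single n c) =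
      (b * f (MonoidAlgebra.single n c)) ⊗ₜ (MonoidAlgebra.of k (Multiplicative ℤ) n) := by
  simp [phiMap, laurentComul_single]

lemma tensor_ext {C : Type} [AddCommGroup C] [Module k C]
    {F G : ExteriorAlgebra k V ⊗[k] Laurent k →ₗ[k] C}
    (h : ∀ (b : ExteriorAlgebra k V) (n : Multiplicative ℤ) (c : k),
      F (b ⊗ₜ MonoidAlgebra.single n c) = G (b ⊗ₜ MonoidAlgebra.single n c)) : F = G := by
  apply TensorProduct.ext'
  intro b y
  induction y using MonoidAlgebra.induction_linear with
  | zero => simp [TensorProduct.tmul_zero]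
  | add f g hf hg =>
      rw [TensorProduct.tmul_add, map_add, map_add, hf, hg]
  | single n c => exact h b n c

lemma central_of_sq {x : ExteriorAlgebra k V}
    (hx2 : x ∈ (LinearMap.range (ExteriorAlgebra.ι k (M := V))) ^ 2) :
    ∀ z : ExteriorAlgebra k V, Commute x z := by
  rw [sq] at hx2
  refine Submodule.mul_induction_on hx2 ?_ ?_
  · rintro _ ⟨a, rfl⟩ _ ⟨b, rfl⟩ z
    induction z using ExteriorAlgebra.induction with
    | algebraMap r => exact (Algebra.commutes r _).symm
    | ι m =>
        have h1 := ExteriorAlgebra.ι_add_mul_swap (R := k) a m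
        have h2 := ExteriorAlgebra.ι_add_mul_swap (R := k) b m
        have e1 : ExteriorAlgebra.ι k a * ExteriorAlgebra.ι k m
            = - (ExteriorAlgebra.ι k m * ExteriorAlgebra.ι k a) :=
          eq_neg_of_add_eq_zero_left h1
        have e2 : ExteriorAlgebra.ι k b * ExteriorAlgebra.ι k m
            = - (ExteriorAlgebra.ι k m * ExteriorAlgebra.ι k b) :=
          eq_neg_of_add_eq_zero_left h2
        show _ = _
        calc ExteriorAlgebra.ι k a * ExteriorAlgebra.ι k b * ExteriorAlgebra.ι k m
            = ExteriorAlgebra.ι k a * (ExteriorAlgebra.ι k b * ExteriorAlgebra.ι k m) :=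
              mul_assoc _ _ _
          _ = ExteriorAlgebra.ι k m * (ExteriorAlgebra.ι k a * ExteriorAlgebra.ι k b) := by
              rw [e2, mul_neg, ← mul_assoc, e1, neg_mul, neg_neg, mul_assoc]
    | mul a' b' ha hb => exact ha.mul_right hb
    | add a' b' ha hb => exact ha.add_right hb
  · intro y z hy hz w
    exact (hy w).add_left (hz w)

lemma eps_of_sq {x : ExteriorAlgebra k V}
    (hx2 : x ∈ (LinearMap.range (ExteriorAlgebra.ι k (M := V))) ^ 2) :
    ExteriorAlgebra.algebraMapInv x = 0 := by
  rw [sq] at hx2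
  refine Submodule.mul_induction_on hx2 ?_ ?_
  · rintro _ ⟨a, rfl⟩ _ ⟨b, rfl⟩
    rw [map_mul]
    have : ExteriorAlgebra.algebraMapInv (ExteriorAlgebra.ι k a) = (0 : k) := by
      simp [ExteriorAlgebra.algebraMapInv, ExteriorAlgebra.lift_ι_apply]
    rw [this, zero_mul]
  · intro y z hy hz
    rw [map_add, hy, hz, add_zero]

lemma one_add_pow {R : Type} [Ring R] (y : R) (hy : y * y = 0) (m : ℕ) :
    (1 + y) ^ m = 1 + (m : ℤ) • y := by
  induction m with
  | zero => simp
  | succ m ih =>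
      rw [pow_succ, ih, add_mul, mul_add, mul_add, one_mul, mul_one, smul_mul_assoc, hy,
        smul_zero, add_zero]
      push_cast
      rw [add_smul, one_smul, one_mul, add_comm ((m : ℤ) • y) y, add_assoc]

lemma g_of {x : ExteriorAlgebra k V} (hxsq : x * x = 0)
    (g : Laurent k →ₐ[k] ExteriorAlgebra k V)
    (hg1 : g (tGen k) = 1 + x) (hg2 : g (tInv k) = 1 - x)
    (n : Multiplicative ℤ) :
    g (MonoidAlgebra.of k (Multiplicative ℤ) n) = 1 + (Multiplicative.toAdd n) • x := by
  obtain ⟨m, hm | hm⟩ := (Multiplicative.toAdd n).eq_nat_or_neg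
  · have hn : n = (Multiplicative.ofAdd 1) ^ m := by
      rw [← ofAdd_nsmul]
      apply Multiplicative.toAdd.injective
      simpa using hm
    have key : g ((MonoidAlgebra.of k (Multiplicative ℤ)) n) = (1 + x) ^ m := by
      rw [hn, map_pow, map_pow,
        show g ((MonoidAlgebra.of k (Multiplicative ℤ)) (Multiplicative.ofAdd 1)) = 1 + x from hg1]
    rw [key, one_add_pow x hxsq m, hm]
  · have hn : n = (Multiplicative.ofAdd (-1 : ℤ)) ^ m := by
      rw [← ofAdd_nsmul]
      apply Multiplicative.toAdd.injective
      simp [hm]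
    have key : g ((MonoidAlgebra.of k (Multiplicative ℤ)) n) = (1 + (-x)) ^ m := by
      rw [hn, map_pow, map_pow,
        show g ((MonoidAlgebra.of k (Multiplicative ℤ)) (Multiplicative.ofAdd (-1 : ℤ))) = 1 - x from hg2]
      rw [sub_eq_add_neg]
    rw [key, one_add_pow (-x) (by rw [neg_mul_neg, hxsq]) m, hm]
    simp

lemma g_single {x : ExteriorAlgebra k V} (hxsq : x * x = 0)
    (g : Laurent k →ₐ[k] ExteriorAlgebra k V)
    (hg1 : g (tGen k) = 1 + x) (hg2 : g (tInv k) = 1 - x)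
    (n : Multiplicative ℤ) (c : k) :
    g (MonoidAlgebra.single n c) = c • (1 + (Multiplicative.toAdd n) • x) := by
  have : (MonoidAlgebra.single n c : Laurent k) = c • MonoidAlgebra.of k (Multiplicative ℤ) n := by
    rw [MonoidAlgebra.of_apply, MonoidAlgebra.smul_single', mul_one]
  rw [this, map_smul, g_of k V hxsq g hg1 hg2 n]

lemma unit_spec {x : ExteriorAlgebra k V} (hxsq : x * x = 0) :
    (1 + x) * (1 - x) = 1 ∧ (1 - x) * (1 + x) = 1 := by
  constructor
  · rw [mul_sub, mul_one, add_mul, one_mul, hxsq, add_zero, add_sub_cancel_right]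
  · rw [sub_mul, one_mul, mul_add, mul_one, hxsq, add_zero, add_sub_cancel_right]

def xUnit {x : ExteriorAlgebra k V} (hxsq : x * x = 0) : (ExteriorAlgebra k V)ˣ :=
  ⟨1 + x, 1 - x, (unit_spec k V hxsq).1, (unit_spec k V hxsq).2⟩

def gOf (u : (ExteriorAlgebra k V)ˣ) : Laurent k →ₐ[k] ExteriorAlgebra k V :=
  MonoidAlgebra.lift k (ExteriorAlgebra k V) (Multiplicative ℤ)
    ((Units.coeHom (ExteriorAlgebra k V)).comp (zpowersHom (ExteriorAlgebra k V)ˣ u))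

lemma gOf_tGen (u : (ExteriorAlgebra k V)ˣ) : gOf k V u (tGen k) = (u : ExteriorAlgebra k V) := by
  rw [gOf, tGen, MonoidAlgebra.lift_of]
  simp

lemma gOf_tInv (u : (ExteriorAlgebra k V)ˣ) :
    gOf k V u (tInv k) = ((u⁻¹ : (ExteriorAlgebra k V)ˣ) : ExteriorAlgebra k V) := by
  rw [gOf, tInv, MonoidAlgebra.lift_of]
  simp

lemma smul_one_add_comm {x : ExteriorAlgebra k V}
    (hc : ∀ z : ExteriorAlgebra k V, Commute x z) (c : k) (t : ℤ)
    (b : ExteriorAlgebra k V) :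
    (c • (1 + t • x)) * b = b * (c • (1 + t • x)) := by
  rw [smul_mul_assoc, mul_smul_comm]
  congr 1
  rw [add_mul, mul_add, one_mul, mul_one, smul_mul_assoc, mul_smul_comm, (hc b).eq]

section props
variable {x : ExteriorAlgebra k V}
  (hc : ∀ z : ExteriorAlgebra k V, Commute x z) (hxsq : x * x = 0)
  (g : Laurent k →ₐ[k] ExteriorAlgebra k V)
  (hg1 : g (tGen k) = 1 + x) (hg2 : g (tInv k) = 1 - x)

include hc hxsq hg1 hg2

lemma phi_mul (z w : ExteriorAlgebra k V ⊗[k] Laurent k) :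
    phiMap k V g.toLinearMap (z * w) =
      phiMap k V g.toLinearMap z * phiMap k V g.toLinearMap w := by
  induction z using TensorProduct.induction_on with
  | zero => simp
  | add z₁ z₂ h₁ h₂ => rw [add_mul, map_add, map_add, add_mul, h₁, h₂]
  | tmul a y =>
    induction y using MonoidAlgebra.induction_linear with
    | zero => simp [TensorProduct.zero_tmul, show (a ⊗ₜ[k] (0:Laurent k)) = 0 from TensorProduct.tmul_zero _ _]
    | add f₁ f₂ h₁ h₂ =>
        rw [TensorProduct.tmul_add, add_mul, map_add, map_add, add_mul, h₁, h₂]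
    | single m c =>
      induction w using TensorProduct.induction_on with
      | zero => simp
      | add w₁ w₂ h₁ h₂ => rw [mul_add, map_add, map_add, mul_add, h₁, h₂]
      | tmul b y' =>
        induction y' using MonoidAlgebra.induction_linear with
        | zero => simp [show (b ⊗ₜ[k] (0:Laurent k)) = 0 from TensorProduct.tmul_zero _ _]
        | add f₁ f₂ h₁ h₂ =>
            rw [TensorProduct.tmul_add, mul_add, map_add, map_add, mul_add, h₁, h₂]
        | single n d =>
          rw [Algebra.TensorProduct.tmul_mul_tmul, MonoidAlgebra.single_mul_single,
            phiMap_tmul_single, phiMap_tmul_single, phiMap_tmul_single,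
            Algebra.TensorProduct.tmul_mul_tmul]
          congr 1
          · rw [AlgHom.toLinearMap_apply, AlgHom.toLinearMap_apply, AlgHom.toLinearMap_apply,
              g_single k V hxsq g hg1 hg2, g_single k V hxsq g hg1 hg2,
              g_single k V hxsq g hg1 hg2]
            have hx : ((Multiplicative.toAdd m) • x) * ((Multiplicative.toAdd n) • x) = 0 := by
              rw [smul_mul_assoc, mul_smul_comm, hxsq, smul_zero, smul_zero]
            have hPQ : (c • (1 + (Multiplicative.toAdd m) • x)) *
                (d • (1 + (Multiplicative.toAdd n) • x)) =
                (c * d) • (1 + (Multiplicative.toAdd (m * n)) • x) := by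
              rw [smul_mul_smul_comm]
              congr 1
              rw [mul_add, mul_one, add_mul, one_mul, hx, add_zero, toAdd_mul, add_smul]
              abel
            rw [← hPQ, mul_assoc a b, ← mul_assoc b, ← smul_one_add_comm k V hc c (Multiplicative.toAdd m) b,
              mul_assoc _ b, ← mul_assoc a]
          · rw [← map_mul]

omit hc hxsq hg1 hg2 in
lemma phi_one : phiMap k V g.toLinearMap 1 = 1 := by
  rw [Algebra.TensorProduct.one_def, MonoidAlgebra.one_def, phiMap_tmul_single]
  rw [AlgHom.toLinearMap_apply, show ((MonoidAlgebra.single 1 1 : Laurent k)) = (1 : Laurent k) from rfl,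
    map_one, mul_one]
  rfl

omit hc hxsq hg1 hg2 in
lemma phi_blin (b : ExteriorAlgebra k V) (z : ExteriorAlgebra k V ⊗[k] Laurent k) :
    phiMap k V g.toLinearMap ((b ⊗ₜ 1) * z) = (b ⊗ₜ 1) * phiMap k V g.toLinearMap z := by
  induction z using TensorProduct.induction_on with
  | zero => simp
  | add z₁ z₂ h₁ h₂ => rw [mul_add, map_add, map_add, mul_add, h₁, h₂]
  | tmul a y =>
    induction y using MonoidAlgebra.induction_linear with
    | zero => simp [show (a ⊗ₜ[k] (0:Laurent k)) = 0 from TensorProduct.tmul_zero _ _]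
    | add f₁ f₂ h₁ h₂ =>
        rw [TensorProduct.tmul_add, mul_add, map_add, map_add, mul_add, h₁, h₂]
    | single n c =>
        rw [Algebra.TensorProduct.tmul_mul_tmul, one_mul, phiMap_tmul_single,
          phiMap_tmul_single, Algebra.TensorProduct.tmul_mul_tmul, one_mul, mul_assoc]

omit hc hxsq hg1 hg2 in
lemma phi_colin :
    (TensorProduct.assoc k (ExteriorAlgebra k V) (Laurent k)
        (Laurent k)).symm.toLinearMap ∘ₗ
      (LinearMap.lTensor (ExteriorAlgebra k V) (laurentComul k)) ∘ₗ phiMap k V g.toLinearMap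
      = (LinearMap.rTensor (Laurent k) (phiMap k V g.toLinearMap)) ∘ₗ
        (TensorProduct.assoc k (ExteriorAlgebra k V) (Laurent k)
          (Laurent k)).symm.toLinearMap ∘ₗ
        (LinearMap.lTensor (ExteriorAlgebra k V) (laurentComul k)) := by
  refine tensor_ext k V (C := (ExteriorAlgebra k V ⊗[k] Laurent k) ⊗[k] Laurent k) ?_
  intro b n c
  simp only [LinearMap.comp_apply, phiMap_tmul_single, LinearMap.lTensor_tmul,
    laurentComul_single]
  rw [MonoidAlgebra.of_apply, laurentComul_single]
  simp only [LinearEquiv.coe_coe, TensorProduct.assoc_symm_tmul, LinearMap.rTensor_tmul,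
    phiMap_tmul_single, MonoidAlgebra.of_apply]

omit hc hg1 hg2 in
lemma phi_inv_comp
    (g' : Laurent k →ₐ[k] ExteriorAlgebra k V)
    (hg1 : g (tGen k) = 1 + x) (hg2 : g (tInv k) = 1 - x)
    (hg1' : g' (tGen k) = 1 - x) (hg2' : g' (tInv k) = 1 + x) :
    (phiMap k V g'.toLinearMap) ∘ₗ (phiMap k V g.toLinearMap) = LinearMap.id := by
  have hxsq' : (-x) * (-x) = 0 := by rw [neg_mul_neg, hxsq]
  have hg1'' : g' (tGen k) = 1 + (-x) := by rw [hg1']; abel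
  have hg2'' : g' (tInv k) = 1 - (-x) := by rw [hg2']; abel
  refine tensor_ext k V (C := ExteriorAlgebra k V ⊗[k] Laurent k) ?_
  intro b n c
  simp only [LinearMap.comp_apply, LinearMap.id_apply, phiMap_tmul_single,
    MonoidAlgebra.of_apply, phiMap_tmul_single]
  rw [AlgHom.toLinearMap_apply, AlgHom.toLinearMap_apply,
    g_single k V hxsq g hg1 hg2, g_single k V hxsq' g' hg1'' hg2'', one_smul,
    mul_assoc]
  have hprod : (1 + (Multiplicative.toAdd n) • x) * (1 + (Multiplicative.toAdd n) • (-x)) = 1 := by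
    have h0 : ((Multiplicative.toAdd n) • x) * ((Multiplicative.toAdd n) • (-x)) = 0 := by
      rw [smul_mul_assoc, mul_smul_comm, mul_neg, hxsq, neg_zero, smul_zero, smul_zero]
    rw [mul_add, mul_one, add_mul, one_mul, h0, add_zero, smul_neg, add_assoc,
      add_neg_cancel, add_zero]
  rw [smul_mul_assoc, hprod, mul_smul_comm, mul_one, TensorProduct.smul_tmul,
    MonoidAlgebra.smul_single', mul_one]

omit hc hxsq hg2 in
lemma phi_not_induced (hx0 : x ≠ 0)
    (hε : ExteriorAlgebra.algebraMapInv x = 0) (ψ : Laurent k →ₐ[k] Laurent k) :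
    phiMap k V g.toLinearMap ≠ LinearMap.lTensor (ExteriorAlgebra k V) ψ.toLinearMap := by
  intro h
  have heq := congrArg (fun F : ExteriorAlgebra k V ⊗[k] Laurent k →ₗ[k]
      ExteriorAlgebra k V ⊗[k] Laurent k =>
      F ((1 : ExteriorAlgebra k V) ⊗ₜ MonoidAlgebra.single (Multiplicative.ofAdd (1:ℤ)) (1:k))) h
  simp only [phiMap_tmul_single, LinearMap.lTensor_tmul] at heq
  rw [AlgHom.toLinearMap_apply,
    show (MonoidAlgebra.single (Multiplicative.ofAdd (1:ℤ)) (1:k) : Laurent k) = tGen k from rfl,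
    hg1, one_mul] at heq
  -- apply the "coefficient of x tensor coefficient of t" functional
  set Q : ExteriorAlgebra k V →ₗ[k] ExteriorAlgebra k V :=
    LinearMap.id - (Algebra.linearMap k (ExteriorAlgebra k V)) ∘ₗ
      (ExteriorAlgebra.algebraMapInv (M := V)).toLinearMap with hQ
  set lam : Laurent k →ₗ[k] k := Finsupp.lapply (Multiplicative.ofAdd (1:ℤ)) ∘ₗ
      (MonoidAlgebra.coeffLinearEquiv k).toLinearMap with hlam
  set F : ExteriorAlgebra k V ⊗[k] Laurent k →ₗ[k] ExteriorAlgebra k V :=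
    (TensorProduct.rid k (ExteriorAlgebra k V)).toLinearMap ∘ₗ
      LinearMap.lTensor (ExteriorAlgebra k V) lam ∘ₗ
      LinearMap.rTensor (Laurent k) Q with hF
  have hF_tmul : ∀ (a : ExteriorAlgebra k V) (hh : Laurent k),
      F (a ⊗ₜ hh) = lam hh • Q a := by
    intro a hh
    simp [hF, TensorProduct.rid_tmul]
  have h1 := congrArg F heq
  rw [hF_tmul, hF_tmul] at h1
  have hQ1 : Q (1 : ExteriorAlgebra k V) = 0 := by
    simp [hQ, Algebra.linearMap_apply]
  have hQ1x : Q (1 + x) = x := by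
    simp [hQ, Algebra.linearMap_apply, hε]
  have hlamt : lam ((MonoidAlgebra.of k (Multiplicative ℤ)) (Multiplicative.ofAdd (1:ℤ))) = 1 := by
    rw [hlam, MonoidAlgebra.of_apply]
    simp [MonoidAlgebra.coeff_single]
  rw [hQ1, hQ1x, hlamt, one_smul, smul_zero] at h1
  exact hx0 h1

end props

end Aux

theorem laurent_twist_not_induced
    (h2 : (2 : k) ≠ 0)
    (V : Type) [AddCommGroup V] [Module k V] [FiniteDimensional k V]
    (hdim : 1 < Module.finrank k V)
    (x : ExteriorAlgebra k V)
    (hx2 : x ∈ (LinearMap.range (ExteriorAlgebra.ι k (M := V))) ^ 2)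
    (hx0 : x ≠ 0) (hxsq : x * x = 0) :
    -- `g(t^{±1}) = 1 ± x` is a well-defined algebra map
    (∃ g : Laurent k →ₐ[k] ExteriorAlgebra k V,
      g (tGen k) = 1 + x ∧ g (tInv k) = 1 - x) ∧
    -- and for any such `g`, the induced endomorphism `b ⊗ h ↦ b·(g ⊗ id)(Δ(h))`
    (∀ g : Laurent k →ₐ[k] ExteriorAlgebra k V,
      g (tGen k) = 1 + x → g (tInv k) = 1 - x →
      ∀ Φ : ExteriorAlgebra k V ⊗[k] Laurent k →ₗ[k]
            ExteriorAlgebra k V ⊗[k] Laurent k,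
      Φ = (LinearMap.rTensor (Laurent k)
            ((LinearMap.mul' k (ExteriorAlgebra k V)) ∘ₗ
              (LinearMap.lTensor (ExteriorAlgebra k V) g.toLinearMap))) ∘ₗ
          (TensorProduct.assoc k (ExteriorAlgebra k V) (Laurent k)
            (Laurent k)).symm.toLinearMap ∘ₗ
          (LinearMap.lTensor (ExteriorAlgebra k V) (laurentComul k)) →
      -- `Φ` is a `B`-algebra automorphism in right `H`-supercomodules:
      (Function.Bijective Φ ∧
        (∀ z w : ExteriorAlgebra k V ⊗[k] Laurent k, Φ (z * w) = Φ z * Φ w) ∧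
        (Φ 1 = 1) ∧
        (∀ (b : ExteriorAlgebra k V) (z : ExteriorAlgebra k V ⊗[k] Laurent k),
          Φ ((b ⊗ₜ 1) * z) = (b ⊗ₜ 1) * Φ z) ∧
        ((TensorProduct.assoc k (ExteriorAlgebra k V) (Laurent k)
            (Laurent k)).symm.toLinearMap ∘ₗ
          (LinearMap.lTensor (ExteriorAlgebra k V) (laurentComul k)) ∘ₗ Φ
          = (LinearMap.rTensor (Laurent k) Φ) ∘ₗ
            (TensorProduct.assoc k (ExteriorAlgebra k V) (Laurent k)
              (Laurent k)).symm.toLinearMap ∘ₗ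
            (LinearMap.lTensor (ExteriorAlgebra k V) (laurentComul k))) ∧
        -- ... which is not of the form `id_B ⊗ ψ`
        ¬ ∃ ψ : Laurent k →ₐ[k] Laurent k,
            ((laurentComul k) ∘ₗ ψ.toLinearMap =
              (LinearMap.rTensor (Laurent k) ψ.toLinearMap) ∘ₗ (laurentComul k)) ∧
            Φ = LinearMap.lTensor (ExteriorAlgebra k V) ψ.toLinearMap)) := by
  have hc : ∀ z : ExteriorAlgebra k V, Commute x z := central_of_sq k V hx2
  have hε : ExteriorAlgebra.algebraMapInv x = 0 := eps_of_sq k V hx2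
  constructor
  · refine ⟨gOf k V (xUnit k V hxsq), ?_, ?_⟩
    · rw [gOf_tGen]; rfl
    · rw [gOf_tInv]; rfl
  · intro g hg1 hg2 Φ hΦ
    have hΦ' : Φ = phiMap k V g.toLinearMap := hΦ
    subst hΦ'
    set g' : Laurent k →ₐ[k] ExteriorAlgebra k V := gOf k V (xUnit k V hxsq)⁻¹ with hg'
    have hg1' : g' (tGen k) = 1 - x := by rw [hg', gOf_tGen]; rfl
    have hg2' : g' (tInv k) = 1 + x := by rw [hg', gOf_tInv, inv_inv]; rfl
    have hleft := phi_inv_comp k V hxsq g g' hg1 hg2 hg1' hg2'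
    have hxsq' : (-x) * (-x) = 0 := by rw [neg_mul_neg, hxsq]
    have hright := phi_inv_comp k V (x := -x) hxsq' g' g
      (by rw [hg1']; abel) (by rw [hg2']; abel) (by rw [hg1]; abel) (by rw [hg2]; abel)
    refine ⟨?_, phi_mul k V hc hxsq g hg1 hg2, phi_one k V g, phi_blin k V g,
      phi_colin k V g, ?_⟩
    · constructor
      · intro z w hzw
        have := congrArg (phiMap k V g'.toLinearMap) hzw
        calc z = (phiMap k V g'.toLinearMap ∘ₗ phiMap k V g.toLinearMap) z := by
                  rw [hleft]; rfl
          _ = (phiMap k V g'.toLinearMap ∘ₗ phiMap k V g.toLinearMap) w := by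
                  simpa using this
          _ = w := by rw [hleft]; rfl
      · intro z
        refine ⟨phiMap k V g'.toLinearMap z, ?_⟩
        have := DFunLike.congr_fun hright z
        simpa using this
    · rintro ⟨ψ, -, hψ⟩
      exact phi_not_induced k V g hg1 hx0 hε ψ hψ
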